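/- Let n ≥ 1 and take F = ℝ. The product over all indices j with 1−n ≤ j ≤ n−1 of the partial derivatives ∂(det Tₙ)/∂x_j is a nonzero polynomial; equivalently, there is a nonempty Zariski-open set of points of ℝ^{2n−1} at which every component of the gradient of det Tₙ is nonzero, so that at such regular points of the hypersurface {det Tₙ = 0} the tangent hyperplane is parallel to no coordinate direction. -/

import Mathlib

/-- The determinant of the `n×n` Toeplitz matrix of indeterminates, whose `(i,j)` entry is
the variable `x_{i-j}`; the `2n-1` variables `x_{1-n}, …, x_{n-1}` are encoded by
`Fin (2*n-1)`, with `x_z` corresponding to index `z + (n-1)`. -/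
noncomputable def toeplitzDet (F : Type*) [Field F] (n : ℕ) :
    MvPolynomial (Fin (2 * n - 1)) F :=
  Matrix.det (Matrix.of fun i j : Fin n =>
    MvPolynomial.X (⟨(i : ℕ) + (n - 1) - (j : ℕ), by
      have hi := i.isLt; have hj := j.isLt; omega⟩ : Fin (2 * n - 1)))

namespace Stmt13Aux

open Finsupp MvPolynomial Equiv

lemma coeff_pderiv' {σ : Type*} {R : Type*} [CommSemiring R] (i : σ) (m : σ →₀ ℕ)
    (P : MvPolynomial σ R) :
    MvPolynomial.coeff m (MvPolynomial.pderiv i P)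
      = ((m i + 1 : ℕ) : R) * MvPolynomial.coeff (m + Finsupp.single i 1) P := by
  classical
  induction P using MvPolynomial.induction_on' with
  | add p q hp hq => simp [hp, hq, mul_add]
  | monomial s a =>
    rw [pderiv_monomial, coeff_monomial, coeff_monomial]
    by_cases hs : s = m + Finsupp.single i 1
    · subst hs
      have h1 : m + Finsupp.single i 1 - Finsupp.single i 1 = m := by
        ext x; simp only [Finsupp.tsub_apply, Finsupp.add_apply]; omega
      rw [if_pos h1, if_pos rfl]
      simp [mul_comm, Finsupp.single_apply]
    · rw [if_neg hs, mul_zero]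
      by_cases h1 : s - Finsupp.single i 1 = m
      · rw [if_pos h1]
        by_cases h2 : s i = 0
        · simp [h2]
        · exfalso
          apply hs
          ext x
          have := DFunLike.congr_fun h1 x
          simp only [Finsupp.tsub_apply, Finsupp.single_apply, Finsupp.add_apply] at this ⊢
          by_cases hx : i = x
          · subst hx; simp at this ⊢; omega
          · simp [hx] at this ⊢; omega
      · rw [if_neg h1]

lemma count_lemma {n N : ℕ} (g : Fin n → Fin N) (j : Fin N) :
    (∑ i : Fin n, Finsupp.single (g i) (1:ℕ)) j
      = (Finset.univ.filter fun i => g i = j).card := by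
  classical
  rw [Finset.sum_apply', Finset.card_filter]
  simp [Finsupp.single_apply]

lemma prod_X_fun {n N : ℕ} {R : Type*} [CommSemiring R] (g : Fin n → Fin N) :
    (∏ i, (MvPolynomial.X (g i) : MvPolynomial (Fin N) R))
      = MvPolynomial.monomial (∑ i, Finsupp.single (g i) 1) 1 := by
  rw [MvPolynomial.monomial_sum_one]; rfl

lemma coeff_toeplitzDet (n : ℕ) (hn : 1 ≤ n) (m : Fin (2*n-1) →₀ ℕ) :
    MvPolynomial.coeff m (toeplitzDet ℝ n)
      = ∑ σ : Equiv.Perm (Fin n),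
          if (∑ i : Fin n, Finsupp.single
              (⟨((σ i : ℕ)) + (n - 1) - (i : ℕ), by
                have hi := (σ i).isLt; omega⟩ : Fin (2*n-1)) (1:ℕ)) = m
          then ((Equiv.Perm.sign σ : ℤ) : ℝ) else 0 := by
  classical
  rw [toeplitzDet, Matrix.det_apply]
  rw [MvPolynomial.coeff_sum]
  refine Finset.sum_congr rfl fun σ _ => ?_
  rw [MvPolynomial.coeff_smul]
  have : (∏ i, (Matrix.of fun i j : Fin n =>
      (MvPolynomial.X (⟨(i : ℕ) + (n - 1) - (j : ℕ), by
        have hi := i.isLt; have hj := j.isLt; omega⟩ : Fin (2 * n - 1)) : MvPolynomial (Fin (2*n-1)) ℝ)) (σ i) i)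
      = MvPolynomial.monomial (∑ i : Fin n, Finsupp.single
          (⟨((σ i : ℕ)) + (n - 1) - (i : ℕ), by
            have hi := (σ i).isLt; omega⟩ : Fin (2*n-1)) (1:ℕ)) (1:ℝ) := by
    rw [← prod_X_fun]
    rfl
  rw [this, MvPolynomial.coeff_monomial]
  by_cases h : (∑ i : Fin n, Finsupp.single
          (⟨((σ i : ℕ)) + (n - 1) - (i : ℕ), by
            have hi := (σ i).isLt; omega⟩ : Fin (2*n-1)) (1:ℕ)) = m
  · rw [if_pos h, if_pos h]
    simp [Units.smul_def, zsmul_eq_mul]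
  · rw [if_neg h, if_neg h, smul_zero]

lemma cond_iff (n k : ℕ) (hk : 1 ≤ k) (hkn : k ≤ n - 1) (a b d : Fin (2*n-1))
    (hav : (a:ℕ) = n-1+k) (hbv : (b:ℕ) = n-1-k) (hdv : (d:ℕ) = n-1)
    (σ : Equiv.Perm (Fin n)) (g : Fin n → Fin (2*n-1))
    (hg : ∀ i, (g i : ℕ) = (σ i : ℕ) + (n-1) - (i:ℕ)) :
    ((∑ i, Finsupp.single (g i) (1:ℕ))
        = Finsupp.single a 1 + Finsupp.single b 1 + Finsupp.single d (n-2))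
      ↔ ∃ p : Fin n, ∃ (hpn : (p:ℕ)+k < n), σ = Equiv.swap p ⟨(p:ℕ)+k, hpn⟩ := by
  classical
  have hn2 : 2 ≤ n := by omega
  have hba : b ≠ a := by intro e; apply_fun (Fin.val) at e; omega
  have hda : d ≠ a := by intro e; apply_fun (Fin.val) at e; omega
  have hab : a ≠ b := fun e => hba e.symm
  have hdb : d ≠ b := by intro e; apply_fun (Fin.val) at e; omega
  have happ : ∀ j : Fin (2*n-1),
      (Finsupp.single a 1 + Finsupp.single b 1 + Finsupp.single d (n-2) : Fin (2*n-1) →₀ ℕ) j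
        = (if a = j then 1 else 0) + (if b = j then 1 else 0) + (if d = j then n-2 else 0) := by
    intro j; simp only [Finsupp.add_apply, Finsupp.single_apply]
  constructor
  · intro h
    have hcard : ∀ j : Fin (2*n-1), (Finset.univ.filter fun i => g i = j).card
        = (Finsupp.single a 1 + Finsupp.single b 1 + Finsupp.single d (n-2) : Fin (2*n-1) →₀ ℕ) j := by
      intro j; rw [← count_lemma g j, h]
    have h1 : (Finset.univ.filter fun i => g i = a).card = 1 := by
      rw [hcard, happ, if_pos rfl, if_neg hba, if_neg hda]
    have h2 : (Finset.univ.filter fun i => g i = b).card = 1 := by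
      rw [hcard, happ, if_pos rfl, if_neg hab, if_neg hdb]
    obtain ⟨p, hp⟩ := Finset.card_eq_one.mp h1
    obtain ⟨q, hq⟩ := Finset.card_eq_one.mp h2
    have hgp : g p = a := by
      have := hp ▸ Finset.mem_singleton_self p
      exact (Finset.mem_filter.mp this).2
    have hgq : g q = b := by
      have := hq ▸ Finset.mem_singleton_self q
      exact (Finset.mem_filter.mp this).2
    have hσp : (σ p : ℕ) = (p:ℕ) + k := by
      have := hg p
      rw [hgp, hav] at this
      have h1 := (σ p).isLt; have h2 := p.isLt
      omega
    have hσq : (σ q : ℕ) + k = (q:ℕ) := by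
      have := hg q
      rw [hgq, hbv] at this
      have h1 := (σ q).isLt; have h2 := q.isLt
      omega
    have hfix : ∀ i, i ≠ p → i ≠ q → σ i = i := by
      intro i hip hiq
      by_cases hga : g i = a
      · exfalso; exact hip (Finset.mem_singleton.mp (hp ▸ Finset.mem_filter.mpr ⟨Finset.mem_univ i, hga⟩))
      by_cases hgb : g i = b
      · exfalso; exact hiq (Finset.mem_singleton.mp (hq ▸ Finset.mem_filter.mpr ⟨Finset.mem_univ i, hgb⟩))
      by_cases hgd : g i = d
      · have := hg i
        rw [hgd, hdv] at this
        have h1 := (σ i).isLt; have h2 := i.isLt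
        exact Fin.ext (by omega)
      · exfalso
        have hzero : (Finset.univ.filter fun j => g j = g i).card = 0 := by
          rw [hcard, happ, if_neg (fun e => hga e.symm), if_neg (fun e => hgb e.symm),
            if_neg (fun e => hgd e.symm)]
        have : i ∈ Finset.univ.filter fun j => g j = g i :=
          Finset.mem_filter.mpr ⟨Finset.mem_univ i, rfl⟩
        rw [Finset.card_eq_zero.mp hzero] at this
        exact absurd this (Finset.notMem_empty i)
    have hpk : (p:ℕ) + k < n := by rw [← hσp]; exact (σ p).isLt
    refine ⟨p, hpk, ?_⟩
    set x : Fin n := ⟨(p:ℕ)+k, hpk⟩ with hx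
    have hxp : x ≠ p := by intro e; apply_fun Fin.val at e; simp [hx] at e; omega
    have hσpx : σ p = x := Fin.ext hσp
    have hqx : q = x := by
      by_contra hqx
      have := hfix x hxp (fun e => hqx e.symm)
      exact hxp (σ.injective (by rw [this, hσpx]))
    have hσq' : σ q = p := by
      apply Fin.ext
      have : (q:ℕ) = (p:ℕ) + k := by rw [hqx]
      omega
    apply Equiv.ext
    intro i
    by_cases hip : i = p
    · subst hip; rw [hσpx, Equiv.swap_apply_left]
    by_cases hiq : i = q
    · subst hiq; rw [hσq', hqx, Equiv.swap_apply_right]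
    · rw [hfix i hip hiq, Equiv.swap_apply_of_ne_of_ne hip (by rw [← hqx]; exact hiq)]
  · rintro ⟨p, hpn, rfl⟩
    set q : Fin n := ⟨(p:ℕ)+k, hpn⟩ with hq
    have hpq : p ≠ q := by intro e; apply_fun Fin.val at e; simp [hq] at e; omega
    have hgp : g p = a := by
      apply Fin.ext
      rw [hg p, Equiv.swap_apply_left, hav]
      have := p.isLt
      simp [hq]; omega
    have hgq : g q = b := by
      apply Fin.ext
      rw [hg q, Equiv.swap_apply_right, hbv]
      have := p.isLt
      simp [hq]; omega
    have hqmem : q ∈ Finset.univ.erase p := Finset.mem_erase.mpr ⟨hpq.symm, Finset.mem_univ q⟩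
    rw [← Finset.add_sum_erase _ _ (Finset.mem_univ p), ← Finset.add_sum_erase _ _ hqmem]
    have hrest : ∀ i ∈ (Finset.univ.erase p).erase q, Finsupp.single (g i) (1:ℕ) = Finsupp.single d 1 := by
      intro i hi
      have h1' := Finset.mem_erase.mp hi
      have h2' := Finset.mem_erase.mp h1'.2
      have hiq := h1'.1
      have hip := h2'.1
      have hσi : Equiv.swap p q i = i := Equiv.swap_apply_of_ne_of_ne hip hiq
      congr 1
      apply Fin.ext
      rw [hg i, hσi, hdv]
      have := i.isLt; omega
    rw [Finset.sum_congr rfl hrest, Finset.sum_const]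
    have hcard2 : ((Finset.univ.erase p).erase q).card = n - 2 := by
      rw [Finset.card_erase_of_mem hqmem, Finset.card_erase_of_mem (Finset.mem_univ p)]
      simp only [Finset.card_univ, Fintype.card_fin]
      omega
    rw [hcard2, hgp, hgq]
    ext j
    simp only [Finsupp.add_apply, Finsupp.smul_apply, Finsupp.single_apply, smul_eq_mul]
    split_ifs <;> omega


lemma cond_iff_zero (n : ℕ) (hn : 1 ≤ n) (d : Fin (2*n-1)) (hdv : (d:ℕ) = n-1)
    (σ : Equiv.Perm (Fin n)) (g : Fin n → Fin (2*n-1))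
    (hg : ∀ i, (g i : ℕ) = (σ i : ℕ) + (n-1) - (i:ℕ)) :
    ((∑ i, Finsupp.single (g i) (1:ℕ)) = Finsupp.single d n) ↔ σ = 1 := by
  classical
  constructor
  · intro h
    have hcard : ∀ j : Fin (2*n-1), (Finset.univ.filter fun i => g i = j).card
        = (Finsupp.single d n : Fin (2*n-1) →₀ ℕ) j := by
      intro j; rw [← count_lemma g j, h]
    apply Equiv.ext
    intro i
    have hgd : g i = d := by
      by_contra hgd
      have hzero : (Finset.univ.filter fun j => g j = g i).card = 0 := by
        rw [hcard, Finsupp.single_eq_of_ne hgd]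
      have : i ∈ Finset.univ.filter fun j => g j = g i :=
        Finset.mem_filter.mpr ⟨Finset.mem_univ i, rfl⟩
      rw [Finset.card_eq_zero.mp hzero] at this
      exact absurd this (Finset.notMem_empty i)
    have := hg i
    rw [hgd, hdv] at this
    have h1 := (σ i).isLt; have h2 := i.isLt
    exact Fin.ext (by simpa using by omega : _)
  · rintro rfl
    have : ∀ i : Fin n, Finsupp.single (g i) (1:ℕ) = Finsupp.single d 1 := by
      intro i
      congr 1
      apply Fin.ext
      rw [hg i, hdv]
      have := i.isLt
      simp only [Equiv.Perm.one_apply]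
      omega
    rw [Finset.sum_congr rfl (fun i _ => this i), Finset.sum_const, Finset.card_univ,
      Fintype.card_fin]
    ext j
    simp [Finsupp.single_apply]


lemma coeff_val_zero (n : ℕ) (hn : 1 ≤ n) (d : Fin (2*n-1)) (hdv : (d:ℕ) = n-1) :
    MvPolynomial.coeff (Finsupp.single d n) (toeplitzDet ℝ n) = 1 := by
  classical
  rw [coeff_toeplitzDet n hn]
  have : ∀ σ : Equiv.Perm (Fin n),
      ((∑ i : Fin n, Finsupp.single
          (⟨((σ i : ℕ)) + (n - 1) - (i : ℕ), by have hi := (σ i).isLt; have hj := i.isLt; omega⟩ : Fin (2*n-1)) (1:ℕ)) = Finsupp.single d n)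
        = (σ = 1) := by
    intro σ
    exact propext (cond_iff_zero n hn d hdv σ _ (fun i => rfl))
  simp only [this]
  rw [Finset.sum_ite_eq' Finset.univ (1 : Equiv.Perm (Fin n))
    (fun σ => ((Equiv.Perm.sign σ : ℤ) : ℝ))]
  simp

lemma coeff_val (n k : ℕ) (hk : 1 ≤ k) (hkn : k ≤ n - 1) (a b d : Fin (2*n-1))
    (hav : (a:ℕ) = n-1+k) (hbv : (b:ℕ) = n-1-k) (hdv : (d:ℕ) = n-1) :
    MvPolynomial.coeff
      (Finsupp.single a 1 + Finsupp.single b 1 + Finsupp.single d (n-2))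
      (toeplitzDet ℝ n) = -((n - k : ℕ) : ℝ) := by
  classical
  have hn : 1 ≤ n := by omega
  rw [coeff_toeplitzDet n hn]
  have hiff : ∀ σ : Equiv.Perm (Fin n),
      ((∑ i : Fin n, Finsupp.single
          (⟨((σ i : ℕ)) + (n - 1) - (i : ℕ), by have hi := (σ i).isLt; have hj := i.isLt; omega⟩ : Fin (2*n-1)) (1:ℕ))
        = Finsupp.single a 1 + Finsupp.single b 1 + Finsupp.single d (n-2))
        = ∃ p : Fin n, ∃ (hpn : (p:ℕ)+k < n), σ = Equiv.swap p ⟨(p:ℕ)+k, hpn⟩ := by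
    intro σ
    exact propext (cond_iff n k hk hkn a b d hav hbv hdv σ _ (fun i => rfl))
  simp only [hiff]
  rw [← Finset.sum_filter]
  set φ : Fin n → Equiv.Perm (Fin n) := fun p =>
    if h : (p:ℕ) + k < n then Equiv.swap p ⟨(p:ℕ)+k, h⟩ else 1 with hφ
  set T : Finset (Fin n) := Finset.univ.filter (fun p : Fin n => (p:ℕ) + k < n) with hT
  have hS : (Finset.univ.filter fun σ : Equiv.Perm (Fin n) =>
      ∃ p : Fin n, ∃ (hpn : (p:ℕ)+k < n), σ = Equiv.swap p ⟨(p:ℕ)+k, hpn⟩) = T.image φ := by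
    ext σ
    simp only [Finset.mem_filter, Finset.mem_univ, true_and, Finset.mem_image, hT, hφ]
    constructor
    · rintro ⟨p, hpn, rfl⟩
      exact ⟨p, by simp [hpn], by simp [hpn]⟩
    · rintro ⟨p, hp, rfl⟩
      have hpn : (p:ℕ) + k < n := by simpa using hp
      exact ⟨p, hpn, by simp [hpn]⟩
  rw [hS]
  have hinj : ∀ p ∈ T, ∀ p' ∈ T, φ p = φ p' → p = p' := by
    intro p hp p' hp' heq
    have hpn : (p:ℕ) + k < n := (Finset.mem_filter.mp hp).2
    have hpn' : (p':ℕ) + k < n := (Finset.mem_filter.mp hp').2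
    rw [hφ] at heq
    simp only [dif_pos hpn, dif_pos hpn'] at heq
    have := congr_arg (fun e : Equiv.Perm (Fin n) => e p) heq
    simp only [Equiv.swap_apply_left] at this
    rw [Equiv.swap_apply_def] at this
    split_ifs at this with h1 h2
    · exact h1
    · exfalso
      apply_fun Fin.val at this h2
      simp at this h2
      omega
    · exfalso
      apply_fun Fin.val at this
      simp at this
      omega
  rw [Finset.sum_image hinj]
  have hsign : ∀ p ∈ T, ((Equiv.Perm.sign (φ p) : ℤ) : ℝ) = -1 := by
    intro p hp
    have hpn : (p:ℕ) + k < n := (Finset.mem_filter.mp hp).2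
    rw [hφ]
    simp only [dif_pos hpn]
    rw [Equiv.Perm.sign_swap (by intro e; apply_fun Fin.val at e; simp at e; omega)]
    simp
  rw [Finset.sum_congr rfl hsign, Finset.sum_const]
  have hTcard : T.card = n - k := by
    have : T = Finset.univ.image (Fin.castLE (show n - k ≤ n by omega)) := by
      ext p
      simp only [hT, Finset.mem_filter, Finset.mem_univ, true_and, Finset.mem_image]
      constructor
      · intro hp
        refine ⟨⟨(p:ℕ), by omega⟩, ?_⟩
        apply Fin.ext
        simp
      · rintro ⟨i, rfl⟩
        have := i.isLt
        simp only [Fin.coe_castLE]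
        omega
    rw [this, Finset.card_image_of_injective _ (Fin.castLE_injective _), Finset.card_univ,
      Fintype.card_fin]
  rw [hTcard]
  simp


end Stmt13Aux

/-- Over `ℝ`, the product of all partial derivatives of `det Tₙ` is a nonzero
polynomial; hence on a nonempty Zariski-open set every component of the gradient of
`det Tₙ` is nonzero. -/
theorem stmt_13 (n : ℕ) (hn : 1 ≤ n) :
    (∏ j : Fin (2 * n - 1), MvPolynomial.pderiv j (toeplitzDet ℝ n)) ≠ 0 := by
  classical
  rw [Finset.prod_ne_zero_iff]
  intro j _
  have hjv := j.isLt
  by_cases hjd : (j:ℕ) = n - 1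
  · -- diagonal variable
    intro h0
    have hc := Stmt13Aux.coeff_pderiv' j (Finsupp.single j (n-1)) (toeplitzDet ℝ n)
    have hsum : Finsupp.single j (n-1) + Finsupp.single j 1 = Finsupp.single j n := by
      rw [← Finsupp.single_add]; congr 1; omega
    rw [h0, hsum, Stmt13Aux.coeff_val_zero n hn j hjd, MvPolynomial.coeff_zero] at hc
    have hval : ((Finsupp.single j (n-1) : Fin (2*n-1) →₀ ℕ) j + 1 : ℕ) = n := by
      rw [Finsupp.single_eq_same]; omega
    rw [hval, mul_one] at hc
    exact (Nat.cast_ne_zero.mpr (by omega : n ≠ 0)) hc.symm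
  · by_cases hja : n - 1 < (j:ℕ)
    · -- j = a, with k = j - (n-1)
      set k : ℕ := (j:ℕ) - (n-1) with hk
      have hk1 : 1 ≤ k := by omega
      have hkn : k ≤ n - 1 := by omega
      set b : Fin (2*n-1) := ⟨n-1-k, by omega⟩ with hb
      set d : Fin (2*n-1) := ⟨n-1, by omega⟩ with hd
      intro h0
      have hc := Stmt13Aux.coeff_pderiv' j
        (Finsupp.single b 1 + Finsupp.single d (n-2)) (toeplitzDet ℝ n)
      have hsum : (Finsupp.single b 1 + Finsupp.single d (n-2)) + Finsupp.single j 1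
          = Finsupp.single j 1 + Finsupp.single b 1 + Finsupp.single d (n-2) := by
        abel
      rw [h0, hsum, MvPolynomial.coeff_zero,
        Stmt13Aux.coeff_val n k hk1 hkn j b d (by omega) (by simp [hb]) (by simp [hd])] at hc
      have hval : (((Finsupp.single b 1 + Finsupp.single d (n-2)) : Fin (2*n-1) →₀ ℕ) j + 1 : ℕ)
          = 1 := by
        have hbj : b ≠ j := by intro e; apply_fun Fin.val at e; simp [hb] at e; omega
        have hdj : d ≠ j := by intro e; apply_fun Fin.val at e; simp [hd] at e; omega
        rw [Finsupp.add_apply, Finsupp.single_eq_of_ne hbj.symm, Finsupp.single_eq_of_ne hdj.symm]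
        omega
      rw [hval] at hc
      simp at hc
      omega
    · -- j = b, with k = (n-1) - j
      set k : ℕ := (n-1) - (j:ℕ) with hk
      have hk1 : 1 ≤ k := by omega
      have hkn : k ≤ n - 1 := by omega
      set a : Fin (2*n-1) := ⟨n-1+k, by omega⟩ with ha
      set d : Fin (2*n-1) := ⟨n-1, by omega⟩ with hd
      intro h0
      have hc := Stmt13Aux.coeff_pderiv' j
        (Finsupp.single a 1 + Finsupp.single d (n-2)) (toeplitzDet ℝ n)
      have hsum : (Finsupp.single a 1 + Finsupp.single d (n-2)) + Finsupp.single j 1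
          = Finsupp.single a 1 + Finsupp.single j 1 + Finsupp.single d (n-2) := by
        abel
      rw [h0, hsum, MvPolynomial.coeff_zero,
        Stmt13Aux.coeff_val n k hk1 hkn a j d (by simp [ha]) (by omega) (by simp [hd])] at hc
      have hval : (((Finsupp.single a 1 + Finsupp.single d (n-2)) : Fin (2*n-1) →₀ ℕ) j + 1 : ℕ)
          = 1 := by
        have haj : a ≠ j := by intro e; apply_fun Fin.val at e; simp [ha] at e; omega
        have hdj : d ≠ j := by intro e; apply_fun Fin.val at e; simp [hd] at e; omega
        rw [Finsupp.add_apply, Finsupp.single_eq_of_ne haj.symm, Finsupp.single_eq_of_ne hdj.symm]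
        omega
      rw [hval] at hc
      simp at hc
      omega
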